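/- arXiv:1011.1521 — 4 statements merged into one kernel-verified Lean document; each statement's English description precedes it below -/
import Mathlib

section
/- Let a₀ ∈ P_n and let b be a symmetric n×n matrix with 0 < tr_{a₀}(b_T²) < (4π)²/n. Then the explicit geodesic a_t with initial point a₀ and initial tangent h := ψ(b) is defined for all t ∈ [0,1] and satisfies a_0 = a₀ and a_1 = a₀·exp(a₀⁻¹b). (That is, the Riemannian exponential map of (P_n, ‖·‖) at a₀ sends ψ(b) to a₀·exp(a₀⁻¹b).) -/
open Matrix Real MeasureTheory Filter

noncomputable section

/-- The set of real symmetric positive-definite `n × n` matrices. -/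
def Pn (n : ℕ) : Set (Matrix (Fin n) (Fin n) ℝ) := {a | a.PosDef}

/-- `tr_a(b) = tr(a⁻¹ b)`. -/
def trA {n : ℕ} (a b : Matrix (Fin n) (Fin n) ℝ) : ℝ := (a⁻¹ * b).trace

/-- `tr_a(b²) = tr((a⁻¹ b)²)`. -/
def trSq {n : ℕ} (a b : Matrix (Fin n) (Fin n) ℝ) : ℝ := ((a⁻¹ * b) * (a⁻¹ * b)).trace

/-- The `a`-traceless part `b_T = b - (1/n) tr_a(b) a`. -/
def tracelessPart {n : ℕ} (a b : Matrix (Fin n) (Fin n) ℝ) : Matrix (Fin n) (Fin n) ℝ :=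
  b - ((trA a b) / (n : ℝ)) • a

/-- `(det (g⁻¹ a))^{1/4}`. -/
def qdet {n : ℕ} (g a : Matrix (Fin n) (Fin n) ℝ) : ℝ := ((g⁻¹ * a).det) ^ ((1 : ℝ) / 4)

/-- The norm `‖b‖_a = (tr((a⁻¹b)²))^{1/2} (det (g⁻¹ a))^{1/4}`. -/
def fiberNorm {n : ℕ} (g a b : Matrix (Fin n) (Fin n) ℝ) : ℝ :=
  Real.sqrt (trSq a b) * qdet g a

/-- Entrywise derivative of a path of matrices. -/
def pathDeriv {n : ℕ} (γ : ℝ → Matrix (Fin n) (Fin n) ℝ) (t : ℝ) : Matrix (Fin n) (Fin n) ℝ :=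
  Matrix.of fun i j => deriv (fun s => γ s i j) t

/-- A path of matrices is `C¹` on a set if it is entrywise `C¹` there. -/
def C1On {n : ℕ} (γ : ℝ → Matrix (Fin n) (Fin n) ℝ) (s : Set ℝ) : Prop :=
  ∀ i j, ContDiffOn ℝ 1 (fun t => γ t i j) s

/-- `γ` is piecewise `C¹` on `[t₀, t₁]`. -/
def PiecewiseC1On {n : ℕ} (γ : ℝ → Matrix (Fin n) (Fin n) ℝ) (t₀ t₁ : ℝ) : Prop :=
  ContinuousOn γ (Set.Icc t₀ t₁) ∧
  ∃ (k : ℕ) (s : Fin (k + 1) → ℝ), StrictMono s ∧ s 0 = t₀ ∧ s (Fin.last k) = t₁ ∧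
    ∀ i : Fin k, C1On γ (Set.Icc (s i.castSucc) (s i.succ))

/-- Length of a path with respect to the fiber metric determined by `g`. -/
def pathLength {n : ℕ} (g : Matrix (Fin n) (Fin n) ℝ) (γ : ℝ → Matrix (Fin n) (Fin n) ℝ)
    (t₀ t₁ : ℝ) : ℝ :=
  ∫ t in t₀..t₁, fiberNorm g (γ t) (pathDeriv γ t)

/-- The Riemannian distance: the infimum of lengths of piecewise `C¹` paths in `P_n`. -/
def ebinDist {n : ℕ} (g a₀ a₁ : Matrix (Fin n) (Fin n) ℝ) : ℝ :=
  sInf {L : ℝ | ∃ γ : ℝ → Matrix (Fin n) (Fin n) ℝ,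
    PiecewiseC1On γ 0 1 ∧ (∀ t ∈ Set.Icc (0 : ℝ) 1, γ t ∈ Pn n) ∧
    γ 0 = a₀ ∧ γ 1 = a₁ ∧ L = pathLength g γ 0 1}

/-- `a·exp(a⁻¹ b)`, using the matrix exponential. -/
def expAt {n : ℕ} (a b : Matrix (Fin n) (Fin n) ℝ) : Matrix (Fin n) (Fin n) ℝ :=
  a * NormedSpace.exp (a⁻¹ * b)

/-- The explicit geodesic with initial point `a₀` and initial tangent `h`. -/
def geodesicPath {n : ℕ} (a₀ h : Matrix (Fin n) (Fin n) ℝ) (t : ℝ) : Matrix (Fin n) (Fin n) ℝ :=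
  let hT := tracelessPart a₀ h
  let q : ℝ := 1 + t / 4 * trA a₀ h
  let r : ℝ := t / 4 * Real.sqrt ((n : ℝ) * trSq a₀ hT)
  if hT = 0 then (q ^ ((4 : ℝ) / n)) • a₀
  else ((q ^ 2 + r ^ 2) ^ ((2 : ℝ) / n)) •
    (a₀ * NormedSpace.exp
      ((4 * Complex.arg ⟨q, r⟩ / Real.sqrt ((n : ℝ) * trSq a₀ hT)) • (a₀⁻¹ * hT)))

/-- The inverse `ψ` of the Riemannian exponential mapping based at `a₀`. -/
def psiMap {n : ℕ} (a₀ b : Matrix (Fin n) (Fin n) ℝ) : Matrix (Fin n) (Fin n) ℝ :=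
  let bT := tracelessPart a₀ b
  let ω : ℝ := Real.sqrt ((n : ℝ) * trSq a₀ bT) / 4
  if bT = 0 then ((4 / (n : ℝ)) * (Real.exp (trA a₀ b / 4) - 1)) • a₀
  else ((4 / (n : ℝ)) * (Real.exp (trA a₀ b / 4) * Real.cos ω - 1)) • a₀ +
    ((4 / Real.sqrt ((n : ℝ) * trSq a₀ bT)) * Real.exp (trA a₀ b / 4) * Real.sin ω) • bT

section Aux
variable {n : ℕ}
open scoped MatrixOrder

lemma aux_posDef_mul_transpose {B : Matrix (Fin n) (Fin n) ℝ} (hB : IsUnit B.det) :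
    (B * Bᵀ).PosDef := by
  rw [posDef_iff_dotProduct_mulVec]
  constructor
  · show (B * Bᵀ)ᴴ = B * Bᵀ
    simp [conjTranspose_mul, conjTranspose_eq_transpose_of_trivial]
  · intro x hx
    have hy : Bᵀ *ᵥ x ≠ 0 := by
      intro h
      exact hx (Matrix.eq_zero_of_mulVec_eq_zero (by simpa using hB) h)
    have : star x ⬝ᵥ (B * Bᵀ) *ᵥ x = (Bᵀ *ᵥ x) ⬝ᵥ (Bᵀ *ᵥ x) := by
      rw [← mulVec_mulVec, star_trivial, dotProduct_mulVec, ← mulVec_transpose]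
    rw [this]
    have := Matrix.dotProduct_star_self_pos_iff (v := Bᵀ *ᵥ x) |>.2 hy
    simpa using this

lemma aux_posDef_smul {ρ : ℝ} (hρ : 0 < ρ) {M : Matrix (Fin n) (Fin n) ℝ} (hM : M.PosDef) :
    (ρ • M).PosDef := by
  rw [posDef_iff_dotProduct_mulVec] at hM ⊢
  refine ⟨by unfold Matrix.IsHermitian at *; rw [conjTranspose_smul, hM.1]; simp,
    fun x hx => ?_⟩
  rw [smul_mulVec, dotProduct_smul, smul_eq_mul]
  exact mul_pos hρ (hM.2 hx)

lemma aux_isSymm_of_posDef {a : Matrix (Fin n) (Fin n) ℝ} (ha : a.PosDef) : a.IsSymm := by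
  have := ha.1
  unfold Matrix.IsHermitian at this
  rwa [conjTranspose_eq_transpose_of_trivial] at this

lemma aux_posDef_mul_exp {a c : Matrix (Fin n) (Fin n) ℝ} (ha : a.PosDef) (hc : c.IsSymm) :
    (a * NormedSpace.exp (a⁻¹ * c)).PosDef := by
  set u := CFC.sqrt a with hu
  have hu2 : u * u = a := CFC.sqrt_mul_sqrt_self a ha.posSemidef.nonneg
  have husymm : u.IsSymm := by
    have := (CFC.sqrt_nonneg a).posSemidef.1
    unfold Matrix.IsHermitian at this
    rwa [conjTranspose_eq_transpose_of_trivial] at this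
  have hadet : IsUnit a.det := isUnit_iff_ne_zero.2 (ne_of_gt ha.det_pos)
  have hudet : IsUnit u.det := by
    rw [← hu2, det_mul] at hadet
    exact isUnit_of_mul_isUnit_left hadet
  have huu : u⁻¹ * u = 1 := nonsing_inv_mul u hudet
  have hainv : a⁻¹ = u⁻¹ * u⁻¹ := by rw [← hu2, Matrix.mul_inv_rev]
  set S := u⁻¹ * c * u⁻¹ with hS
  have hconj : a⁻¹ * c = u⁻¹ * S * (u⁻¹)⁻¹ := by
    rw [nonsing_inv_nonsing_inv u hudet, hS, hainv]
    rw [Matrix.mul_assoc, Matrix.mul_assoc, Matrix.mul_assoc, huu, Matrix.mul_one]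
  have hSsymm : S.IsSymm := by
    have hui : u⁻¹.IsSymm := by
      unfold Matrix.IsSymm
      rw [transpose_nonsing_inv, husymm.eq]
    unfold Matrix.IsSymm
    rw [hS, transpose_mul, transpose_mul, hui.eq, hc.eq, Matrix.mul_assoc]
  set T : Matrix (Fin n) (Fin n) ℝ := (1/2 : ℝ) • S with hT
  have hTsymm : T.IsSymm := hSsymm.smul _
  have hexpS : NormedSpace.exp S = NormedSpace.exp T * NormedSpace.exp T := by
    rw [← Matrix.exp_add_of_commute T T (Commute.refl T)]
    congr 1
    rw [hT, ← add_smul]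
    norm_num
  have hexpTsymm : (NormedSpace.exp T).IsSymm := Matrix.IsSymm.exp hTsymm
  have huinv_unit : IsUnit (u⁻¹) :=
    Matrix.isUnit_nonsing_inv_iff.2 ((Matrix.isUnit_iff_isUnit_det u).2 hudet)
  have key : a * NormedSpace.exp (a⁻¹ * c)
      = (u * NormedSpace.exp T) * (u * NormedSpace.exp T)ᵀ := by
    rw [hconj, Matrix.exp_conj (u⁻¹) S huinv_unit, nonsing_inv_nonsing_inv u hudet,
      transpose_mul, hexpTsymm.eq, husymm.eq, ← hu2]
    rw [hexpS]
    simp only [← Matrix.mul_assoc]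
    rw [Matrix.mul_nonsing_inv_cancel_right u u hudet]
  rw [key]
  apply aux_posDef_mul_transpose
  rw [det_mul]
  exact hudet.mul ((Matrix.isUnit_iff_isUnit_det _).1 (Matrix.isUnit_exp T))

lemma trA_add' (a x y : Matrix (Fin n) (Fin n) ℝ) : trA a (x + y) = trA a x + trA a y := by
  simp [trA, Matrix.mul_add]

lemma trA_smul' (a x : Matrix (Fin n) (Fin n) ℝ) (s : ℝ) : trA a (s • x) = s * trA a x := by
  simp [trA, Matrix.mul_smul]

lemma trA_self' {a : Matrix (Fin n) (Fin n) ℝ} (h : IsUnit a.det) : trA a a = n := by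
  simp [trA, Matrix.nonsing_inv_mul a h]

lemma trSq_smul' (a x : Matrix (Fin n) (Fin n) ℝ) (s : ℝ) :
    trSq a (s • x) = s ^ 2 * trSq a x := by
  simp [trSq, Matrix.mul_smul, Matrix.smul_mul, smul_smul, sq]

lemma trA_tp' {a : Matrix (Fin n) (Fin n) ℝ} (h : IsUnit a.det) (hn : (n:ℝ) ≠ 0)
    (b : Matrix (Fin n) (Fin n) ℝ) : trA a (tracelessPart a b) = 0 := by
  have hrw : tracelessPart a b = b + (-(trA a b / n)) • a := by
    simp [tracelessPart, sub_eq_add_neg, neg_smul]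
  rw [hrw, trA_add', trA_smul', trA_self' h]
  field_simp
  ring

lemma aux_exp_smul_one (c : ℝ) :
    NormedSpace.exp (c • (1 : Matrix (Fin n) (Fin n) ℝ)) = Real.exp c • 1 := by
  have hfun : NormedSpace.exp (fun _ : Fin n => c) = fun _ : Fin n => Real.exp c := by
    funext i
    rw [Pi.coe_exp, Real.exp_eq_exp_ℝ]
  rw [Matrix.smul_one_eq_diagonal, Matrix.exp_diagonal, Matrix.smul_one_eq_diagonal, hfun]

end Aux

/-- the explicit geodesic with initial tangent `ψ(b)` joins `a₀` to
`a₀·exp(a₀⁻¹b)` within `P_n`. -/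
theorem stmt_10 (n : ℕ) (hn : 1 ≤ n)
    (a₀ : Matrix (Fin n) (Fin n) ℝ) (ha₀ : a₀ ∈ Pn n)
    (b : Matrix (Fin n) (Fin n) ℝ) (hb : b.IsSymm)
    (hpos : 0 < trSq a₀ (tracelessPart a₀ b))
    (hlt : trSq a₀ (tracelessPart a₀ b) < (4 * Real.pi) ^ 2 / n) :
    (∀ t ∈ Set.Icc (0 : ℝ) 1, geodesicPath a₀ (psiMap a₀ b) t ∈ Pn n) ∧
    geodesicPath a₀ (psiMap a₀ b) 0 = a₀ ∧
    geodesicPath a₀ (psiMap a₀ b) 1 = expAt a₀ b := by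
  have ha : a₀.PosDef := ha₀
  have hdet : IsUnit a₀.det := isUnit_iff_ne_zero.2 (ne_of_gt ha.det_pos)
  have hnR : (0:ℝ) < n := by exact_mod_cast Nat.lt_of_lt_of_le Nat.zero_lt_one hn
  have hn0 : (n:ℝ) ≠ 0 := ne_of_gt hnR
  set bT := tracelessPart a₀ b with hbTdef
  set τ := trA a₀ b with hτdef
  set T := trSq a₀ bT with hTdef
  have hbT0 : bT ≠ 0 := by
    intro h
    rw [hTdef, h] at hpos
    simp [trSq] at hpos
  have hbTsymm : bT.IsSymm := by
    rw [hbTdef, tracelessPart]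
    exact Matrix.IsSymm.sub hb (Matrix.IsSymm.smul (aux_isSymm_of_posDef ha) _)
  have hnT : 0 < (n:ℝ) * T := mul_pos hnR hpos
  set ω := Real.sqrt ((n:ℝ) * T) / 4 with hωdef
  have hsqrtnT : Real.sqrt ((n:ℝ) * T) = 4 * ω := by rw [hωdef]; ring
  have hω0 : 0 < ω := div_pos (Real.sqrt_pos.2 hnT) (by norm_num)
  have hωπ : ω < π := by
    have h1 : (n:ℝ) * T < (4 * π) ^ 2 := by
      have := (lt_div_iff₀ hnR).1 hlt
      linarith [this]
    have h2 : Real.sqrt ((n:ℝ) * T) < 4 * π :=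
      (Real.sqrt_lt' (by positivity)).2 h1
    rw [hωdef]
    linarith
  have hsin : 0 < Real.sin ω := Real.sin_pos_of_pos_of_lt_pi hω0 hωπ
  set E := Real.exp (τ / 4) with hEdef
  have hE : 0 < E := Real.exp_pos _
  set d : ℝ := E * Real.sin ω / ω with hddef
  have hd0 : 0 < d := div_pos (mul_pos hE hsin) hω0
  -- unfold psiMap
  have hψ : psiMap a₀ b = (4 / (n:ℝ) * (E * Real.cos ω - 1)) • a₀ + d • bT := by
    rw [psiMap]
    rw [if_neg hbT0, ← hτdef, ← hTdef, ← hωdef, ← hEdef]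
    congr 1
    rw [hsqrtnT, hddef]
    congr 1
    field_simp
  have htrh : trA a₀ (psiMap a₀ b) = 4 * (E * Real.cos ω - 1) := by
    rw [hψ, trA_add', trA_smul', trA_smul', trA_self' hdet, hbTdef, trA_tp' hdet hn0]
    field_simp
    ring
  have htphT : tracelessPart a₀ (psiMap a₀ b) = d • bT := by
    rw [tracelessPart, htrh, hψ]
    have hc : 4 * (E * Real.cos ω - 1) / (n:ℝ) = 4 / (n:ℝ) * (E * Real.cos ω - 1) := by ring
    rw [hc]
    abel
  have hhT0 : tracelessPart a₀ (psiMap a₀ b) ≠ 0 := by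
    rw [htphT]
    exact smul_ne_zero (ne_of_gt hd0) hbT0
  have hsqrt2 : Real.sqrt ((n:ℝ) * trSq a₀ (d • bT)) = 4 * (E * Real.sin ω) := by
    rw [trSq_smul', ← hTdef, show (n:ℝ) * (d ^ 2 * T) = d ^ 2 * ((n:ℝ) * T) by ring,
      Real.sqrt_mul (sq_nonneg d), Real.sqrt_sq hd0.le, hsqrtnT, hddef]
    field_simp
  -- normalized form of the geodesic
  have hgeo : ∀ t : ℝ, geodesicPath a₀ (psiMap a₀ b) t =
      (((1 + t / 4 * (4 * (E * Real.cos ω - 1))) ^ 2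
        + (t / 4 * (4 * (E * Real.sin ω))) ^ 2) ^ ((2:ℝ) / n)) •
      (a₀ * NormedSpace.exp (a₀⁻¹ *
        ((Complex.arg ⟨1 + t / 4 * (4 * (E * Real.cos ω - 1)),
            t / 4 * (4 * (E * Real.sin ω))⟩ / ω) • bT))) := by
    intro t
    rw [geodesicPath]
    rw [if_neg hhT0, htrh, htphT, hsqrt2]
    have hscal : ∀ θ : ℝ, (4 * θ / (4 * (E * Real.sin ω))) • (a₀⁻¹ * (d • bT))
        = a₀⁻¹ * ((θ / ω) • bT) := by
      intro θ
      rw [mul_smul_comm, mul_smul_comm, smul_smul]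
      congr 1
      rw [hddef]
      field_simp
    rw [hscal]
  refine ⟨?_, ?_, ?_⟩
  · -- membership
    intro t ht
    rw [hgeo t]
    have hq2r2 : 0 < (1 + t / 4 * (4 * (E * Real.cos ω - 1))) ^ 2
        + (t / 4 * (4 * (E * Real.sin ω))) ^ 2 := by
      rcases ht.1.eq_or_lt with h0 | h0
      · rw [← h0]; norm_num
      · have hr : 0 < t / 4 * (4 * (E * Real.sin ω)) := by
          apply mul_pos (by linarith)
          positivity
        nlinarith [sq_nonneg (1 + t / 4 * (4 * (E * Real.cos ω - 1)))]
    exact aux_posDef_smul (Real.rpow_pos_of_pos hq2r2 _)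
      (aux_posDef_mul_exp ha (hbTsymm.smul _))
  · -- value at 0
    rw [hgeo 0]
    have h1 : ((⟨1 + 0 / 4 * (4 * (E * Real.cos ω - 1)),
        0 / 4 * (4 * (E * Real.sin ω))⟩ : ℂ)) = 1 := by
      simp [Complex.ext_iff]
    rw [h1, Complex.arg_one]
    norm_num
  · -- value at 1
    rw [hgeo 1]
    have harg : Complex.arg ⟨1 + 1 / 4 * (4 * (E * Real.cos ω - 1)),
        1 / 4 * (4 * (E * Real.sin ω))⟩ = ω := by
      have hc : ((⟨1 + 1 / 4 * (4 * (E * Real.cos ω - 1)),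
          1 / 4 * (4 * (E * Real.sin ω))⟩ : ℂ))
          = (E : ℂ) * (Complex.cos ω + Complex.sin ω * Complex.I) := by
        apply Complex.ext <;>
          simp [Complex.cos_ofReal_re, Complex.sin_ofReal_re,
            Complex.cos_ofReal_im, Complex.sin_ofReal_im] <;> ring
      rw [hc]
      exact Complex.arg_mul_cos_add_sin_mul_I hE ⟨by linarith [Real.pi_pos], hωπ.le⟩
    rw [harg, div_self (ne_of_gt hω0), one_smul]
    have hbase : (1 + 1 / 4 * (4 * (E * Real.cos ω - 1))) ^ 2
        + (1 / 4 * (4 * (E * Real.sin ω))) ^ 2 = E ^ 2 := by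
      have h := Real.cos_sq_add_sin_sq ω
      nlinarith [h]
    rw [hbase]
    have hpow : (E ^ 2 : ℝ) ^ ((2:ℝ) / n) = Real.exp (τ / n) := by
      rw [Real.rpow_def_of_pos (by positivity), Real.log_pow, hEdef, Real.log_exp]
      congr 1
      push_cast
      field_simp
      ring
    rw [hpow]
    -- right hand side
    have hbdec : a₀⁻¹ * b = a₀⁻¹ * bT + (τ / (n:ℝ)) • (1 : Matrix (Fin n) (Fin n) ℝ) := by
      have hb' : b = bT + (τ / (n:ℝ)) • a₀ := by
        rw [hbTdef, tracelessPart, ← hτdef]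
        abel
      conv_lhs => rw [hb']
      rw [Matrix.mul_add, mul_smul_comm, Matrix.nonsing_inv_mul a₀ hdet]
    have hcomm : Commute (a₀⁻¹ * bT) ((τ / (n:ℝ)) • (1 : Matrix (Fin n) (Fin n) ℝ)) :=
      (Commute.one_right _).smul_right _
    rw [expAt, hbdec, Matrix.exp_add_of_commute _ _ hcomm, aux_exp_smul_one,
      mul_smul_comm, Matrix.mul_one, mul_smul_comm]


end
end

section
/- Let a < b be real numbers and let r : [a,b] → ℝ be continuously differentiable. Define r̂(t) := min( max_{s ∈ [a,t]} r(s), 1 ). Then r̂ is continuous, monotone nondecreasing, and maps Lebesgue-null subsets of [a,b] to Lebesgue-null sets; consequently r̂ is differentiable almost everywhere, its almost-everywhere derivative r̂' is Lebesgue integrable on [a,b], and r̂(b) − r̂(a) = ∫_a^b r̂'(t) dt. -/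
open Matrix Real MeasureTheory Filter

noncomputable section

open scoped ENNReal NNReal

/-- absolute continuity of the capped running maximum of a `C¹` function. -/
theorem stmt_11 (a b : ℝ) (hab : a < b) (r : ℝ → ℝ)
    (hr : ContDiffOn ℝ 1 r (Set.Icc a b)) :
    letI rhat : ℝ → ℝ := fun t => min (sSup (r '' Set.Icc a t)) 1
    ContinuousOn rhat (Set.Icc a b) ∧
    MonotoneOn rhat (Set.Icc a b) ∧
    (∀ N : Set ℝ, N ⊆ Set.Icc a b → MeasureTheory.volume N = 0 →
      MeasureTheory.volume (rhat '' N) = 0) ∧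
    (∀ᵐ t ∂(MeasureTheory.volume.restrict (Set.Icc a b)), DifferentiableAt ℝ rhat t) ∧
    MeasureTheory.IntegrableOn (deriv rhat) (Set.Icc a b) ∧
    rhat b - rhat a = ∫ t in a..b, deriv rhat t := by
  set rhat : ℝ → ℝ := fun t => min (sSup (r '' Set.Icc a t)) 1 with hrhat
  have hrc : ContinuousOn r (Set.Icc a b) := hr.continuousOn
  -- Lipschitz constant for r on [a,b]
  obtain ⟨C, hC⟩ := isCompact_Icc.exists_bound_of_continuousOn
    (hr.continuousOn_derivWithin (uniqueDiffOn_Icc hab) le_rfl)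
  set K : NNReal := C.toNNReal with hKdef
  have hrlip : LipschitzOnWith K r (Set.Icc a b) := by
    apply (convex_Icc a b).lipschitzOnWith_of_nnnorm_derivWithin_le
      (hr.differentiableOn one_ne_zero)
    intro x hx
    have h1 : ‖derivWithin r (Set.Icc a b) x‖ ≤ C := hC x hx
    have : ‖derivWithin r (Set.Icc a b) x‖.toNNReal ≤ C.toNNReal := Real.toNNReal_mono h1
    rw [← norm_toNNReal]; exact this
  -- The running maximum
  set M : ℝ → ℝ := fun t => sSup (r '' Set.Icc a t) with hMdef
  have himg : ∀ t ∈ Set.Icc a b,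
      IsCompact (r '' Set.Icc a t) ∧ (r '' Set.Icc a t).Nonempty := by
    intro t ht
    exact ⟨isCompact_Icc.image_of_continuousOn (hrc.mono (Set.Icc_subset_Icc le_rfl ht.2)),
      (Set.nonempty_Icc.2 ht.1).image r⟩
  have hMmono : ∀ u ∈ Set.Icc a b, ∀ v ∈ Set.Icc a b, u ≤ v → M u ≤ M v := by
    intro u hu v hv huv
    exact csSup_le_csSup (himg v hv).1.bddAbove (himg u hu).2
      (Set.image_mono (Set.Icc_subset_Icc le_rfl huv))
  have hMstep : ∀ u ∈ Set.Icc a b, ∀ v ∈ Set.Icc a b, u ≤ v →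
      M v ≤ M u + (K : ℝ) * (v - u) := by
    intro u hu v hv huv
    refine csSup_le (himg v hv).2 ?_
    rintro y ⟨w, hw, rfl⟩
    have hKnn : (0 : ℝ) ≤ (K : ℝ) := K.coe_nonneg
    by_cases hwu : w ≤ u
    · have h1 : r w ≤ M u := le_csSup (himg u hu).1.bddAbove ⟨w, ⟨hw.1, hwu⟩, rfl⟩
      nlinarith
    · push_neg at hwu
      have hwb : w ∈ Set.Icc a b := ⟨hw.1, hw.2.trans hv.2⟩
      have hd := hrlip.dist_le_mul w hwb u hu
      rw [Real.dist_eq, Real.dist_eq] at hd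
      have h1 : r w - r u ≤ |r w - r u| := le_abs_self _
      have h2 : |w - u| = w - u := abs_of_nonneg (by linarith)
      have h3 : r u ≤ M u := le_csSup (himg u hu).1.bddAbove ⟨u, ⟨hu.1, le_rfl⟩, rfl⟩
      have h4 : w ≤ v := hw.2
      nlinarith
  -- clamp to [a,b]
  set c : ℝ → ℝ := fun t => max a (min t b) with hcdef
  have hcmem : ∀ t, c t ∈ Set.Icc a b :=
    fun t => ⟨le_max_left _ _, max_le hab.le (min_le_right t b)⟩
  have hceq : ∀ t ∈ Set.Icc a b, c t = t := by
    intro t ht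
    show max a (min t b) = t
    rw [min_eq_left ht.2, max_eq_right ht.1]
  have hcmono : Monotone c := fun x y hxy => max_le_max le_rfl (min_le_min hxy le_rfl)
  -- the globally defined function g
  set g : ℝ → ℝ := fun t => min (M (c t)) 1 with hgdef
  have hg_eq : ∀ t ∈ Set.Icc a b, g t = rhat t := by
    intro t ht
    show min (M (c t)) 1 = min (sSup (r '' Set.Icc a t)) 1
    rw [hceq t ht]
  have hgmono : Monotone g := fun x y hxy =>
    min_le_min (hMmono _ (hcmem x) _ (hcmem y) (hcmono hxy)) le_rfl
  have hMdist : ∀ u ∈ Set.Icc a b, ∀ v ∈ Set.Icc a b,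
      |M u - M v| ≤ (K : ℝ) * |u - v| := by
    intro u hu v hv
    rcases le_total u v with h | h
    · rw [abs_of_nonpos (sub_nonpos.2 (hMmono u hu v hv h)),
        abs_of_nonpos (sub_nonpos.2 h)]
      have := hMstep u hu v hv h
      linarith
    · rw [abs_of_nonneg (sub_nonneg.2 (hMmono v hv u hu h)),
        abs_of_nonneg (sub_nonneg.2 h)]
      have := hMstep v hv u hu h
      linarith
  have hclip : ∀ x y : ℝ, |c x - c y| ≤ |x - y| := by
    intro x y
    have h1 : |c x - c y| ≤ max |a - a| |min x b - min y b| :=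
      abs_max_sub_max_le_max a (min x b) a (min y b)
    have h2 : |min x b - min y b| ≤ max |x - y| |b - b| := abs_min_sub_min_le_max x b y b
    rw [sub_self, abs_zero, max_eq_left (abs_nonneg _)] at h2
    rw [sub_self, abs_zero] at h1
    exact h1.trans (max_le (abs_nonneg _) h2)
  have hglip : LipschitzWith K g := by
    apply LipschitzWith.of_dist_le_mul
    intro x y
    rw [Real.dist_eq, Real.dist_eq]
    calc |g x - g y| ≤ max |M (c x) - M (c y)| |1 - 1| :=
          abs_min_sub_min_le_max _ _ _ _
      _ = |M (c x) - M (c y)| := by rw [sub_self, abs_zero, max_eq_left (abs_nonneg _)]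
      _ ≤ (K : ℝ) * |c x - c y| := hMdist _ (hcmem x) _ (hcmem y)
      _ ≤ (K : ℝ) * |x - y| :=
          mul_le_mul_of_nonneg_left (hclip x y) K.coe_nonneg
  have hgcont : Continuous g := hglip.continuous
  -- Part 1
  have part1 : ContinuousOn rhat (Set.Icc a b) :=
    hgcont.continuousOn.congr fun t ht => (hg_eq t ht).symm
  -- Part 2
  have part2 : MonotoneOn rhat (Set.Icc a b) := by
    intro x hx y hy hxy
    rw [← hg_eq x hx, ← hg_eq y hy]
    exact hgmono hxy
  -- Part 3
  have part3 : ∀ N : Set ℝ, N ⊆ Set.Icc a b → volume N = 0 → volume (rhat '' N) = 0 := by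
    intro N hN hN0
    have himeq : rhat '' N = g '' N :=
      Set.image_congr fun x hx => (hg_eq x (hN hx)).symm
    rw [himeq]
    have h1 : μH[1] (g '' N) ≤ (K : ℝ≥0∞) ^ (1:ℝ) * μH[1] N :=
      hglip.hausdorffMeasure_image_le zero_le_one N
    rw [MeasureTheory.hausdorffMeasure_real] at h1
    rw [hN0, mul_zero] at h1
    exact le_antisymm h1 zero_le
  -- Stieltjes function machinery
  set G : StieltjesFunction ℝ :=
    ⟨g, hgmono, fun x => hgcont.continuousAt.continuousWithinAt⟩ with hGdef
  have hsub : ∀ x y : ℝ, x ≤ y → g y - g x ≤ (K : ℝ) * (y - x) := by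
    intro x y hxy
    have h := hglip.dist_le_mul x y
    rw [Real.dist_eq, Real.dist_eq] at h
    have h2 : g y - g x ≤ |g x - g y| := by rw [abs_sub_comm]; exact le_abs_self _
    have h3 : |x - y| = y - x := by rw [abs_sub_comm]; exact abs_of_nonneg (by linarith)
    rw [h3] at h
    linarith
  set H : StieltjesFunction ℝ :=
    ⟨fun x => (K : ℝ) * x - g x,
      fun x y hxy => by have := hsub x y hxy; dsimp only; linarith,
      fun x => (((continuous_const.mul continuous_id).sub hgcont).continuousAt).continuousWithinAt⟩
    with hHdef
  have hGH : G + H = K • StieltjesFunction.id := by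
    apply StieltjesFunction.ext
    intro x
    show g x + ((K : ℝ) * x - g x) = (K : ℝ) * x
    ring
  have hmeas : G.measure + H.measure = K • (volume : Measure ℝ) := by
    rw [← StieltjesFunction.measure_add, hGH, StieltjesFunction.measure_smul,
      ← Real.volume_eq_stieltjes_id]
  have hle : G.measure ≤ K • (volume : Measure ℝ) := by
    rw [← hmeas]; exact Measure.le_add_right le_rfl
  have hac : G.measure ≪ (volume : Measure ℝ) := by
    refine Measure.AbsolutelyContinuous.mk fun s _ hs0 => ?_
    have h1 : G.measure s ≤ (K • (volume : Measure ℝ)) s := hle s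
    rw [Measure.smul_apply, hs0, smul_zero] at h1
    exact le_antisymm h1 zero_le
  set ρ : ℝ → ℝ≥0∞ := G.measure.rnDeriv volume with hρdef
  have hgderiv : ∀ᵐ x ∂(volume : Measure ℝ), HasDerivAt g (ρ x).toReal x :=
    G.ae_hasDerivAt
  have hpair : ∀ᵐ x ∂(volume : Measure ℝ), x ∉ ({a, b} : Set ℝ) := by
    rw [← measure_eq_zero_iff_ae_notMem]
    exact ((Set.finite_singleton b).insert a).measure_zero volume
  have hmain : ∀ᵐ x ∂(volume.restrict (Set.Icc a b)),
      DifferentiableAt ℝ rhat x ∧ deriv rhat x = (ρ x).toReal := by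
    filter_upwards [ae_restrict_of_ae hgderiv, ae_restrict_of_ae hpair,
      ae_restrict_mem (measurableSet_Icc : MeasurableSet (Set.Icc a b))]
      with x hx hx2 hx3
    simp only [Set.mem_insert_iff, Set.mem_singleton_iff, not_or] at hx2
    have hxIoo : x ∈ Set.Ioo a b :=
      ⟨lt_of_le_of_ne hx3.1 (Ne.symm hx2.1), lt_of_le_of_ne hx3.2 hx2.2⟩
    have hev : rhat =ᶠ[nhds x] g := by
      filter_upwards [Ioo_mem_nhds hxIoo.1 hxIoo.2] with y hy
      exact (hg_eq y (Set.Ioo_subset_Icc_self hy)).symm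
    have hdiff : DifferentiableAt ℝ g x := hx.differentiableAt
    refine ⟨hev.differentiableAt_iff.2 hdiff, ?_⟩
    rw [hev.deriv_eq, hx.deriv]
  have part4 : ∀ᵐ t ∂(volume.restrict (Set.Icc a b)), DifferentiableAt ℝ rhat t :=
    hmain.mono fun x h => h.1
  have hρint : IntegrableOn (fun x => (ρ x).toReal) (Set.Icc a b) volume := by
    apply integrable_toReal_of_lintegral_ne_top
      (Measure.measurable_rnDeriv _ _).aemeasurable
    rw [Measure.setLIntegral_rnDeriv hac]
    rw [StieltjesFunction.measure_Icc]
    exact ENNReal.ofReal_ne_top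
  have part5 : IntegrableOn (deriv rhat) (Set.Icc a b) volume :=
    hρint.congr (hmain.mono fun x h => h.2.symm)
  have part6 : rhat b - rhat a = ∫ t in a..b, deriv rhat t := by
    have haeIoc : ∀ᵐ x ∂(volume.restrict (Set.Ioc a b)), deriv rhat x = (ρ x).toReal :=
      ae_restrict_of_ae_restrict_of_subset Set.Ioc_subset_Icc_self
        (hmain.mono fun x h => h.2)
    rw [intervalIntegral.integral_of_le hab.le,
      setIntegral_congr_ae measurableSet_Ioc
        (ae_imp_of_ae_restrict haeIoc),
      Measure.setIntegral_toReal_rnDeriv hac, measureReal_def,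
      StieltjesFunction.measure_Ioc,
      ENNReal.toReal_ofReal (sub_nonneg.2 (hgmono hab.le)),
      ← hg_eq b ⟨hab.le, le_rfl⟩, ← hg_eq a ⟨le_rfl, hab.le⟩]
  exact ⟨part1, part2, part3, part4, part5, part6⟩

end
end

section
/- Let a ∈ P_n and let v be a symmetric n×n matrix with v_T ≠ 0 and tr_a(v_T²) < (4π)²/n, and set b := a·exp(a⁻¹v). Then every point of the explicit geodesic from a to b (the explicit geodesic with initial point a and initial tangent ψ(v)) lies in the plane P := { y₁·a·exp(y₂·a⁻¹v_T) : y₁ > 0, y₂ ∈ ℝ }. -/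
open Matrix Real MeasureTheory Filter

noncomputable section

lemma trace_sq_pos_of_symm {n : ℕ} {m : Matrix (Fin n) (Fin n) ℝ} (hm : m.IsSymm) (h0 : m ≠ 0) :
    0 < (m * m).trace := by
  have key : (m * m).trace = ∑ i, ∑ j, (m i j) ^ 2 := by
    rw [Matrix.trace]
    refine Finset.sum_congr rfl fun i _ => ?_
    rw [Matrix.diag_apply, Matrix.mul_apply]
    exact Finset.sum_congr rfl fun j _ => by rw [hm.apply i j, sq]
  rw [key]
  have hne : ∃ i j, m i j ≠ 0 := by
    by_contra h
    push_neg at h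
    exact h0 (by ext i j; exact h i j)
  obtain ⟨i, j, hij⟩ := hne
  have hi : 0 < ∑ j, (m i j) ^ 2 :=
    Finset.sum_pos' (fun k _ => sq_nonneg _) ⟨j, Finset.mem_univ j, by positivity⟩
  exact Finset.sum_pos' (fun k _ => Finset.sum_nonneg fun l _ => sq_nonneg _)
    ⟨i, Finset.mem_univ i, hi⟩

open scoped MatrixOrder in
lemma trSq_pos' {n : ℕ} {a b : Matrix (Fin n) (Fin n) ℝ} (ha : a.PosDef) (hb : b.IsSymm)
    (h0 : b ≠ 0) : 0 < trSq a b := by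
  have hA : (a⁻¹).PosDef := ha.inv
  set S := CFC.sqrt (a⁻¹) with hSdef
  have hSS : S * S = a⁻¹ := CFC.sqrt_mul_sqrt_self (a⁻¹) hA.posSemidef.nonneg
  have hSh : S.IsSymm := by
    have := (CFC.sqrt_nonneg (a⁻¹)).posSemidef.1
    rwa [Matrix.IsHermitian, Matrix.conjTranspose_eq_transpose_of_trivial] at this
  clear_value S
  have hm : (S * b * S).IsSymm := by
    rw [Matrix.IsSymm, Matrix.transpose_mul, Matrix.transpose_mul, hSh, hb, mul_assoc]
  have hdet : IsUnit S.det := by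
    have h1 : S.det * S.det = (a⁻¹).det := by rw [← Matrix.det_mul, hSS]
    have hpos := hA.det_pos
    have h2 : S.det ≠ 0 := by
      intro h; rw [h, mul_zero] at h1; rw [← h1] at hpos; exact lt_irrefl _ hpos
    exact h2.isUnit
  have hm0 : S * b * S ≠ 0 := by
    intro h
    apply h0
    have e : S⁻¹ * (S * b * S) * S⁻¹ = b := by
      rw [← Matrix.mul_assoc, ← Matrix.mul_assoc, Matrix.nonsing_inv_mul _ hdet, Matrix.one_mul,
        Matrix.mul_assoc, Matrix.mul_nonsing_inv _ hdet, Matrix.mul_one]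
    rw [← e, h, Matrix.mul_zero, Matrix.zero_mul]
  have htr := trace_sq_pos_of_symm hm hm0
  have eq : trSq a b = ((S * b * S) * (S * b * S)).trace := by
    rw [trSq, ← hSS]
    have h1 : S * S * b * (S * S * b) = S * (S * b * S * (S * b)) := by noncomm_ring
    have h2 : S * b * S * (S * b) * S = S * b * S * (S * b * S) := by noncomm_ring
    rw [h1, Matrix.trace_mul_comm, h2]
  rw [eq]; exact htr

/-- the explicit geodesic from `a` to `a·exp(a⁻¹v)` lies in the plane spanned by
`a` and the direction `v_T`. -/
theorem stmt_16 (n : ℕ) (hn : 1 ≤ n)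
    (a : Matrix (Fin n) (Fin n) ℝ) (ha : a ∈ Pn n)
    (v : Matrix (Fin n) (Fin n) ℝ) (hv : v.IsSymm)
    (hvT : tracelessPart a v ≠ 0)
    (hlt : trSq a (tracelessPart a v) < (4 * Real.pi) ^ 2 / n) :
    ∀ t ∈ Set.Icc (0 : ℝ) 1, ∃ y₁ y₂ : ℝ, 0 < y₁ ∧
      geodesicPath a (psiMap a v) t =
        y₁ • (a * NormedSpace.exp (y₂ • (a⁻¹ * tracelessPart a v))) := by
  intro t ht
  have haS : a.IsSymm := by
    have := ha.isHermitian
    rwa [Matrix.IsHermitian, Matrix.conjTranspose_eq_transpose_of_trivial] at this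
  have hws : (tracelessPart a v).IsSymm := by
    rw [tracelessPart, Matrix.IsSymm, Matrix.transpose_sub, Matrix.transpose_smul, hv, haS]
  have hwpos : 0 < trSq a (tracelessPart a v) := trSq_pos' ha hws hvT
  have hn0 : (0 : ℝ) < n := by exact_mod_cast hn
  have hspos : 0 < Real.sqrt ((n : ℝ) * trSq a (tracelessPart a v)) :=
    Real.sqrt_pos.2 (mul_pos hn0 hwpos)
  have hslt : Real.sqrt ((n : ℝ) * trSq a (tracelessPart a v)) < 4 * Real.pi := by
    rw [show (4 * Real.pi) = Real.sqrt ((4 * Real.pi) ^ 2) from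
      (Real.sqrt_sq (by positivity)).symm]
    apply Real.sqrt_lt_sqrt (le_of_lt (mul_pos hn0 hwpos))
    have h1 : (n : ℝ) * trSq a (tracelessPart a v) < n * ((4 * Real.pi) ^ 2 / n) :=
      (mul_lt_mul_iff_right₀ hn0).2 hlt
    rwa [mul_div_cancel₀ _ hn0.ne'] at h1
  have hsin : 0 < Real.sin (Real.sqrt ((n : ℝ) * trSq a (tracelessPart a v)) / 4) :=
    Real.sin_pos_of_pos_of_lt_pi (by positivity) (by linarith)
  set c₂ : ℝ := (4 / Real.sqrt ((n : ℝ) * trSq a (tracelessPart a v))) *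
      Real.exp (trA a v / 4) *
      Real.sin (Real.sqrt ((n : ℝ) * trSq a (tracelessPart a v)) / 4) with hc₂def
  set c₁ : ℝ := (4 / (n : ℝ)) * (Real.exp (trA a v / 4) *
      Real.cos (Real.sqrt ((n : ℝ) * trSq a (tracelessPart a v)) / 4) - 1) with hc₁def
  have hc₂ : 0 < c₂ := by
    rw [hc₂def]
    have := Real.exp_pos (trA a v / 4)
    positivity
  have hpsi : psiMap a v = c₁ • a + c₂ • tracelessPart a v := by
    rw [psiMap]
    rw [if_neg hvT]
  have hainv : a⁻¹ * a = 1 := Matrix.nonsing_inv_mul a ha.det_pos.ne'.isUnit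
  have htrw : trA a (tracelessPart a v) = 0 := by
    rw [tracelessPart, trA, Matrix.mul_sub, Matrix.mul_smul, hainv, Matrix.trace_sub,
      Matrix.trace_smul, Matrix.trace_one]
    simp only [smul_eq_mul, trA, Fintype.card_fin]
    field_simp
    ring
  have htrA : trA a (psiMap a v) = c₁ * n := by
    rw [hpsi, trA, Matrix.mul_add, Matrix.mul_smul, Matrix.mul_smul, hainv, Matrix.trace_add,
      Matrix.trace_smul, Matrix.trace_smul, Matrix.trace_one]
    have : (a⁻¹ * tracelessPart a v).trace = trA a (tracelessPart a v) := rfl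
    rw [this, htrw]
    simp
  have hTeq : tracelessPart a (psiMap a v) = c₂ • tracelessPart a v := by
    rw [tracelessPart, htrA, hpsi, mul_div_assoc, div_self hn0.ne', mul_one]
    abel
  have hc2w : c₂ • tracelessPart a v ≠ 0 := smul_ne_zero hc₂.ne' hvT
  have hc2ws : (c₂ • tracelessPart a v).IsSymm := by
    rw [Matrix.IsSymm, Matrix.transpose_smul, hws]
  have hpos2 : 0 < trSq a (c₂ • tracelessPart a v) := trSq_pos' ha hc2ws hc2w
  have hgeo : geodesicPath a (psiMap a v) t =
      (((1 + t / 4 * trA a (psiMap a v)) ^ 2 +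
        (t / 4 * Real.sqrt ((n : ℝ) * trSq a (c₂ • tracelessPart a v))) ^ 2) ^ ((2 : ℝ) / n)) •
      (a * NormedSpace.exp
        ((4 * Complex.arg ⟨1 + t / 4 * trA a (psiMap a v),
            t / 4 * Real.sqrt ((n : ℝ) * trSq a (c₂ • tracelessPart a v))⟩ /
          Real.sqrt ((n : ℝ) * trSq a (c₂ • tracelessPart a v))) •
          (a⁻¹ * (c₂ • tracelessPart a v)))) := by
    rw [geodesicPath]
    simp only [hTeq]
    rw [if_neg hc2w]
  have hsS : 0 < Real.sqrt ((n : ℝ) * trSq a (c₂ • tracelessPart a v)) :=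
    Real.sqrt_pos.2 (mul_pos hn0 hpos2)
  have hbase : 0 < (1 + t / 4 * trA a (psiMap a v)) ^ 2 +
      (t / 4 * Real.sqrt ((n : ℝ) * trSq a (c₂ • tracelessPart a v))) ^ 2 := by
    rcases eq_or_lt_of_le ht.1 with h0 | h0
    · rw [← h0]; norm_num
    · have hr : 0 < t / 4 * Real.sqrt ((n : ℝ) * trSq a (c₂ • tracelessPart a v)) := by
        positivity
      nlinarith [sq_nonneg (1 + t / 4 * trA a (psiMap a v))]
  refine ⟨((1 + t / 4 * trA a (psiMap a v)) ^ 2 +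
      (t / 4 * Real.sqrt ((n : ℝ) * trSq a (c₂ • tracelessPart a v))) ^ 2) ^ ((2 : ℝ) / n),
    (4 * Complex.arg ⟨1 + t / 4 * trA a (psiMap a v),
      t / 4 * Real.sqrt ((n : ℝ) * trSq a (c₂ • tracelessPart a v))⟩ /
      Real.sqrt ((n : ℝ) * trSq a (c₂ • tracelessPart a v))) * c₂,
    Real.rpow_pos_of_pos hbase _, ?_⟩
  rw [hgeo, Matrix.mul_smul, smul_smul]


end
end

section
/- For every a ∈ P_n, the infimum of total lengths sup_{s<1} L(γ|_{[0,s]}) over all paths γ : [0,1) → P_n that are piecewise C¹ on every subinterval [0,s] with s < 1, satisfy γ(0) = a, and satisfy det(g⁻¹γ(t)) → 0 as t → 1, equals (4/√n)·(det(g⁻¹a))^{1/4}. (That is, the distance from a to the singular point [0] of the metric completion of (P_n,d) is (4/√n)·(det(g⁻¹a))^{1/4}, realized by the straight segment t ↦ (1−t)·a.) -/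
open Matrix Real MeasureTheory Filter

noncomputable section

lemma trace_adjugate_mul {n : ℕ} (M M' : Matrix (Fin n) (Fin n) ℝ) :
    (M.adjugate * M').trace
      = ∑ σ : Equiv.Perm (Fin n), ((Equiv.Perm.sign σ : ℤ) : ℝ) *
          ∑ j, (∏ i ∈ Finset.univ.erase j, M (σ i) i) * M' (σ j) j := by
  have h1 : (M.adjugate * M').trace = ∑ j, (M.adjugate *ᵥ (fun i => M' i j)) j := by
    simp [Matrix.trace, Matrix.diag, Matrix.mul_apply, Matrix.mulVec, dotProduct]
  rw [h1]
  have h2 : ∀ j, (M.adjugate *ᵥ (fun i => M' i j)) j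
      = (M.updateCol j (fun i => M' i j)).det := by
    intro j
    rw [← Matrix.cramer_eq_adjugate_mulVec, Matrix.cramer_apply]
  simp_rw [h2, Matrix.det_apply']
  rw [Finset.sum_comm]
  refine Finset.sum_congr rfl fun σ _ => ?_
  rw [Finset.mul_sum]
  refine Finset.sum_congr rfl fun j _ => ?_
  have hprod : (∏ i, M.updateCol j (fun i => M' i j) (σ i) i)
      = M' (σ j) j * ∏ i ∈ Finset.univ.erase j, M (σ i) i := by
    rw [← Finset.mul_prod_erase Finset.univ _ (Finset.mem_univ j)]
    congr 1
    · rw [Matrix.updateCol_apply, if_pos rfl]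
    · refine Finset.prod_congr rfl fun i hi => ?_
      rw [Matrix.updateCol_apply, if_neg (Finset.ne_of_mem_erase hi)]
  rw [hprod]; ring

lemma hasDerivAt_det_path {n : ℕ} {f : ℝ → Matrix (Fin n) (Fin n) ℝ}
    {M' : Matrix (Fin n) (Fin n) ℝ} {x : ℝ}
    (h : ∀ i j, HasDerivAt (fun t => f t i j) (M' i j) x) :
    HasDerivAt (fun t => (f t).det) (((f x).adjugate * M').trace) x := by
  have H : HasDerivAt
      (fun t => ∑ σ : Equiv.Perm (Fin n), ((Equiv.Perm.sign σ : ℤ) : ℝ) * ∏ i, f t (σ i) i)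
      (∑ σ : Equiv.Perm (Fin n), ((Equiv.Perm.sign σ : ℤ) : ℝ) *
        ∑ j, (∏ i ∈ Finset.univ.erase j, f x (σ i) i) • M' (σ j) j) x := by
    apply HasDerivAt.fun_sum
    intro σ _
    exact (HasDerivAt.fun_finsetProd (fun i _ => h (σ i) i)).const_mul _
  have hfun : (fun t => (f t).det)
      = fun t => ∑ σ : Equiv.Perm (Fin n), ((Equiv.Perm.sign σ : ℤ) : ℝ) * ∏ i, f t (σ i) i :=
    funext fun t => Matrix.det_apply' (f t)
  have hval : ((f x).adjugate * M').trace
      = ∑ σ : Equiv.Perm (Fin n), ((Equiv.Perm.sign σ : ℤ) : ℝ) *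
        ∑ j, (∏ i ∈ Finset.univ.erase j, f x (σ i) i) • M' (σ j) j := by
    rw [trace_adjugate_mul]
    simp [smul_eq_mul]
  rw [hfun, hval]; exact H

open scoped MatrixOrder in
lemma sym_trace_facts {n : ℕ} {a b : Matrix (Fin n) (Fin n) ℝ}
    (ha : a.PosDef) (hb : bᵀ = b) :
    0 ≤ ((a⁻¹ * b) * (a⁻¹ * b)).trace ∧
      ((a⁻¹ * b).trace) ^ 2 ≤ (n : ℝ) * ((a⁻¹ * b) * (a⁻¹ * b)).trace := by
  classical
  set c := CFC.sqrt a with hc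
  have hcc : c * c = a := CFC.sqrt_mul_sqrt_self a ha.posSemidef.nonneg
  have hcherm : c.IsHermitian := (CFC.sqrt_nonneg a).posSemidef.1
  have hct : cᵀ = c := by
    ext i j
    have := congrFun (congrFun hcherm.eq i) j
    simpa [Matrix.conjTranspose_apply] using this
  have hdetc : IsUnit c.det := by
    refine isUnit_iff_ne_zero.mpr fun h0 => ?_
    have : a.det = c.det * c.det := by rw [← hcc, Matrix.det_mul]
    rw [h0, mul_zero] at this
    exact ha.det_pos.ne' this
  have hcinv : c⁻¹ * c = 1 := Matrix.nonsing_inv_mul c hdetc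
  have hainv : a⁻¹ = c⁻¹ * c⁻¹ := by rw [← hcc, Matrix.mul_inv_rev]
  set T := c⁻¹ * b * c⁻¹ with hT
  have hTt : Tᵀ = T := by
    rw [hT, Matrix.transpose_mul, Matrix.transpose_mul, Matrix.transpose_nonsing_inv, hct, hb]
    rw [Matrix.mul_assoc]
  have htr : (a⁻¹ * b).trace = T.trace := by
    rw [hainv, hT]
    have h := Matrix.trace_mul_comm (c⁻¹ * b) c⁻¹
    simp only [← Matrix.mul_assoc] at h ⊢
    exact h.symm
  have htr2 : ((a⁻¹ * b) * (a⁻¹ * b)).trace = (T * T).trace := by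
    rw [hainv, hT]
    have h := Matrix.trace_mul_comm (c⁻¹ * b * c⁻¹ * c⁻¹ * b) c⁻¹
    simp only [← Matrix.mul_assoc] at h ⊢
    exact h.symm
  have hTsq : (T * T).trace = ∑ i, ∑ j, (T i j) ^ 2 := by
    simp only [Matrix.trace, Matrix.diag, Matrix.mul_apply]
    refine Finset.sum_congr rfl fun i _ => Finset.sum_congr rfl fun j _ => ?_
    have : T j i = T i j := by conv_lhs => rw [← hTt, Matrix.transpose_apply]
    rw [this, sq]
  have hnonneg : 0 ≤ (T * T).trace := by
    rw [hTsq]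
    exact Finset.sum_nonneg fun i _ => Finset.sum_nonneg fun j _ => sq_nonneg _
  constructor
  · rw [htr2]; exact hnonneg
  · rw [htr, htr2, hTsq]
    have h1 : (T.trace) ^ 2 ≤ (n : ℝ) * ∑ i, (T i i) ^ 2 := by
      have := sq_sum_le_card_mul_sum_sq (s := Finset.univ) (f := fun i => T i i)
      simpa [Matrix.trace, Matrix.diag] using this
    refine h1.trans ?_
    refine mul_le_mul_of_nonneg_left ?_ (Nat.cast_nonneg n)
    refine Finset.sum_le_sum fun i _ => ?_
    exact Finset.single_le_sum (f := fun j => (T i j) ^ 2)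
      (fun j _ => sq_nonneg _) (Finset.mem_univ i)

lemma posDef_smul' {n : ℕ} {A : Matrix (Fin n) (Fin n) ℝ} (hA : A.PosDef) {c : ℝ}
    (hc : 0 < c) : (c • A).PosDef := hA.smul hc

lemma smul_matrix_inv {n : ℕ} {A : Matrix (Fin n) (Fin n) ℝ} (hA : IsUnit A.det) {c : ℝ}
    (hc : c ≠ 0) : (c • A)⁻¹ = c⁻¹ • A⁻¹ := by
  have : Invertible c := invertibleOfNonzero hc
  rw [Matrix.inv_smul A c hA, invOf_eq_inv]

-- fiberNorm along the straight segment

lemma seg_fiberNorm {n : ℕ} (hn : 1 ≤ n) {g a : Matrix (Fin n) (Fin n) ℝ}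
    (hg : g.PosDef) (ha : a.PosDef) {t : ℝ} (ht : t ∈ Set.Ico (0:ℝ) 1) :
    fiberNorm g ((1 - t) • a) (-a)
      = Real.sqrt n * qdet g a * (1 - t) ^ ((n : ℝ) / 4 - 1) := by
  have h1t : 0 < 1 - t := by linarith [ht.2]
  have hdeta : IsUnit a.det := isUnit_iff_ne_zero.mpr ha.det_pos.ne'
  have hinv : ((1 - t) • a)⁻¹ = (1 - t)⁻¹ • a⁻¹ := smul_matrix_inv hdeta h1t.ne'
  have hmul : ((1 - t) • a)⁻¹ * (-a) = -((1 - t)⁻¹ • (1 : Matrix (Fin n) (Fin n) ℝ)) := by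
    rw [hinv, Matrix.mul_neg, Matrix.smul_mul, Matrix.nonsing_inv_mul a hdeta]
  have htrSq : trSq ((1 - t) • a) (-a) = ((1 - t)⁻¹) ^ 2 * n := by
    unfold trSq
    rw [hmul, neg_mul_neg, Matrix.smul_mul, Matrix.mul_smul, smul_smul,
      Matrix.one_mul, Matrix.trace_smul, Matrix.trace_one]
    simp [sq]
  have hdet : 0 < (g⁻¹ * a).det := by
    rw [Matrix.det_mul, Matrix.det_nonsing_inv, Ring.inverse_eq_inv']
    exact mul_pos (inv_pos.mpr hg.det_pos) ha.det_pos
  have hqdet : qdet g ((1 - t) • a) = (1 - t) ^ ((n : ℝ) / 4) * qdet g a := by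
    unfold qdet
    rw [Matrix.mul_smul, Matrix.det_smul, Fintype.card_fin,
      Real.mul_rpow (pow_nonneg h1t.le n) hdet.le,
      ← Real.rpow_natCast (1 - t) n, ← Real.rpow_mul h1t.le, mul_one_div]
  unfold fiberNorm
  rw [htrSq, hqdet, Real.sqrt_mul (sq_nonneg _), Real.sqrt_sq (by positivity)]
  rw [Real.rpow_sub h1t, Real.rpow_one]
  ring

lemma det_gammainv_pos {n : ℕ} {g a : Matrix (Fin n) (Fin n) ℝ} (hg : g.PosDef)
    (ha : a.PosDef) : 0 < (g⁻¹ * a).det := by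
  rw [Matrix.det_mul, Matrix.det_nonsing_inv, Ring.inverse_eq_inv']
  exact mul_pos (inv_pos.mpr hg.det_pos) ha.det_pos

lemma adjugate_eq_det_smul_inv {n : ℕ} {A : Matrix (Fin n) (Fin n) ℝ} (h : A.det ≠ 0) :
    A.adjugate = A.det • A⁻¹ := by
  rw [Matrix.inv_def, smul_smul, Ring.inverse_eq_inv', mul_inv_cancel₀ h, one_smul]

lemma contOn_matMul {n : ℕ} {f g : ℝ → Matrix (Fin n) (Fin n) ℝ} {s : Set ℝ}
    (hf : ContinuousOn f s) (hg : ContinuousOn g s) :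
    ContinuousOn (fun x => f x * g x) s :=
  hf.mul hg

lemma contOn_trace {n : ℕ} {f : ℝ → Matrix (Fin n) (Fin n) ℝ} {s : Set ℝ}
    (hf : ContinuousOn f s) : ContinuousOn (fun x => (f x).trace) s :=
  (continuous_id.matrix_trace).comp_continuousOn hf

lemma piece_bound {n : ℕ} (hn : 1 ≤ n) {g : Matrix (Fin n) (Fin n) ℝ} (hg : g.PosDef)
    {γ : ℝ → Matrix (Fin n) (Fin n) ℝ} {u v : ℝ} (huv : u < v)
    (hsub : Set.Icc u v ⊆ Set.Ico 0 1)
    (hP : ∀ t ∈ Set.Ico (0:ℝ) 1, (γ t).PosDef)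
    (hC1 : C1On γ (Set.Icc u v)) :
    IntervalIntegrable (fun t => fiberNorm g (γ t) (pathDeriv γ t)) volume u v ∧
      4 / Real.sqrt n * (qdet g (γ u) - qdet g (γ v)) ≤
        ∫ t in u..v, fiberNorm g (γ t) (pathDeriv γ t) := by
  classical
  have hsqn : (0:ℝ) < Real.sqrt n := Real.sqrt_pos.mpr (by exact_mod_cast hn)
  -- positivity of determinants
  have hPt : ∀ t ∈ Set.Icc u v, (γ t).PosDef := fun t ht => hP t (hsub ht)
  have hDpos : ∀ t ∈ Set.Icc u v, 0 < (g⁻¹ * γ t).det :=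
    fun t ht => det_gammainv_pos hg (hPt t ht)
  -- continuity of γ
  have hγc : ContinuousOn γ (Set.Icc u v) := by
    refine (continuousOn_pi (X := fun _ : Fin n => Fin n → ℝ) (f := γ)).mpr fun i => (continuousOn_pi (f := fun t => γ t i)).mpr fun j => ?_
    exact (hC1 i j).continuousOn
  -- determinant function
  set D : ℝ → ℝ := fun t => (g⁻¹ * γ t).det with hD
  have hDc : ContinuousOn D (Set.Icc u v) :=
    ((continuous_const.matrix_mul continuous_id).matrix_det).comp_continuousOn hγc
  -- f = qdet ∘ γ
  set f : ℝ → ℝ := fun t => D t ^ ((1:ℝ)/4) with hf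
  have hfc : ContinuousOn f (Set.Icc u v) :=
    hDc.rpow_const (fun t ht => Or.inl (hDpos t ht).ne')
  have hfpos : ∀ t ∈ Set.Icc u v, 0 < f t := fun t ht => Real.rpow_pos_of_pos (hDpos t ht) _
  have hfq : ∀ t, f t = qdet g (γ t) := fun t => rfl
  -- derivative matrix within
  set G : ℝ → Matrix (Fin n) (Fin n) ℝ :=
    fun t => Matrix.of fun i j => derivWithin (fun s => γ s i j) (Set.Icc u v) t with hG
  have hGc : ContinuousOn G (Set.Icc u v) := by
    refine (continuousOn_pi (X := fun _ : Fin n => Fin n → ℝ) (f := G)).mpr fun i => (continuousOn_pi (f := fun t => G t i)).mpr fun j => ?_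
    exact (hC1 i j).continuousOn_derivWithin (uniqueDiffOn_Icc huv) le_rfl
  have hGd : ∀ t ∈ Set.Ioo u v, ∀ i j, HasDerivAt (fun s => γ s i j) (G t i j) t := by
    intro t ht i j
    have hmem : Set.Icc u v ∈ nhds t := Icc_mem_nhds ht.1 ht.2
    have h1 : DifferentiableAt ℝ (fun s => γ s i j) t :=
      (((hC1 i j).differentiableOn one_ne_zero) t (Set.Ioo_subset_Icc_self ht)).differentiableAt hmem
    have h2 : G t i j = deriv (fun s => γ s i j) t := derivWithin_of_mem_nhds hmem
    rw [h2]; exact h1.hasDerivAt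
  have hGpath : ∀ t ∈ Set.Ioo u v, pathDeriv γ t = G t := by
    intro t ht; ext i j
    show deriv (fun s => γ s i j) t = G t i j
    exact (hGd t ht i j).deriv
  -- symmetry of G
  have hγsym : ∀ t ∈ Set.Icc u v, ∀ i j, γ t i j = γ t j i := by
    intro t ht i j
    have := (hPt t ht).1
    have h2 := congrFun (congrFun this.eq j) i
    simpa [Matrix.conjTranspose_apply] using h2
  have hGsym : ∀ t ∈ Set.Icc u v, (G t)ᵀ = G t := by
    intro t ht; ext i j
    show derivWithin (fun s => γ s j i) (Set.Icc u v) t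
        = derivWithin (fun s => γ s i j) (Set.Icc u v) t
    apply derivWithin_congr
    · intro s hs; exact (hγsym s hs i j).symm
    · exact (hγsym t ht i j).symm
  -- derivative of D
  have hD' : ∀ t ∈ Set.Ioo u v, HasDerivAt D (D t * ((γ t)⁻¹ * G t).trace) t := by
    intro t ht
    have htI := Set.Ioo_subset_Icc_self ht
    have key : HasDerivAt (fun s => (g⁻¹ * γ s).det)
        (((g⁻¹ * γ t).adjugate * (g⁻¹ * G t)).trace) t := by
      apply hasDerivAt_det_path
      intro i j
      have : ∀ s, (g⁻¹ * γ s) i j = ∑ k, g⁻¹ i k * γ s k j := fun s => Matrix.mul_apply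
      simp_rw [this]
      have : (g⁻¹ * G t) i j = ∑ k, g⁻¹ i k * G t k j := Matrix.mul_apply
      rw [this]
      exact HasDerivAt.fun_sum fun k _ => (hGd t ht k j).const_mul _
    have hval : ((g⁻¹ * γ t).adjugate * (g⁻¹ * G t)).trace
        = D t * ((γ t)⁻¹ * G t).trace := by
      have hdet : IsUnit (g⁻¹ * γ t).det := isUnit_iff_ne_zero.mpr (hDpos t htI).ne'
      have hadj : (g⁻¹ * γ t).adjugate = (g⁻¹ * γ t).det • (g⁻¹ * γ t)⁻¹ :=
        adjugate_eq_det_smul_inv (hDpos t htI).ne'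
      have hinv : (g⁻¹ * γ t)⁻¹ = (γ t)⁻¹ * g := by
        rw [Matrix.mul_inv_rev, Matrix.nonsing_inv_nonsing_inv g
          (isUnit_iff_ne_zero.mpr hg.det_pos.ne')]
      rw [hadj, hinv, Matrix.smul_mul, Matrix.trace_smul]
      have : (γ t)⁻¹ * g * (g⁻¹ * G t) = (γ t)⁻¹ * G t := by
        rw [Matrix.mul_assoc, ← Matrix.mul_assoc g, Matrix.mul_nonsing_inv g
          (isUnit_iff_ne_zero.mpr hg.det_pos.ne'), Matrix.one_mul]
      rw [this]; simp [hD]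
    rw [← hval]; exact key
  -- derivative of f
  set ψ : ℝ → ℝ := fun t => (1/4) * f t * ((γ t)⁻¹ * G t).trace with hψ
  have hf' : ∀ t ∈ Set.Ioo u v, HasDerivAt f (ψ t) t := by
    intro t ht
    have htI := Set.Ioo_subset_Icc_self ht
    have h1 := (hD' t ht).rpow_const (p := (1:ℝ)/4) (Or.inl (hDpos t htI).ne')
    have hD0 : D t ≠ 0 := (hDpos t htI).ne'
    have h2 : D t * ((γ t)⁻¹ * G t).trace * ((1:ℝ)/4) * D t ^ ((1:ℝ)/4 - 1) = ψ t := by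
      rw [Real.rpow_sub (hDpos t htI), Real.rpow_one, hψ]
      set r := ((γ t)⁻¹ * G t).trace with hr
      show D t * r * (1/4) * (D t ^ ((1:ℝ)/4) / D t) = 1/4 * D t ^ ((1:ℝ)/4) * r
      field_simp
    rw [← h2]; exact h1
  -- continuity of inverse of γ and thus ψ and φ
  have hγinvc : ContinuousOn (fun t => (γ t)⁻¹) (Set.Icc u v) := by
    have : ∀ t ∈ Set.Icc u v, (γ t)⁻¹ = ((γ t).det)⁻¹ • (γ t).adjugate := by
      intro t ht
      rw [Matrix.inv_def, Ring.inverse_eq_inv']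
    refine ContinuousOn.congr ?_ this
    apply ContinuousOn.fun_smul
    · exact ((continuous_id.matrix_det).comp_continuousOn hγc).inv₀
        (fun t ht => (hPt t ht).det_pos.ne')
    · exact (continuous_id.matrix_adjugate).comp_continuousOn hγc
  have htrc : ContinuousOn (fun t => ((γ t)⁻¹ * G t).trace) (Set.Icc u v) :=
    contOn_trace (contOn_matMul hγinvc hGc)
  have hψc : ContinuousOn ψ (Set.Icc u v) :=
    (continuousOn_const.mul hfc).mul htrc
  set φ : ℝ → ℝ := fun t => fiberNorm g (γ t) (G t) with hφ
  have hφc : ContinuousOn φ (Set.Icc u v) := by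
    apply ContinuousOn.mul
    · exact Real.continuous_sqrt.comp_continuousOn
        (contOn_trace (contOn_matMul (contOn_matMul hγinvc hGc) (contOn_matMul hγinvc hGc)))
    · exact hfc
  -- pointwise bound : |ψ t| ≤ √n/4 φ t on Icc
  have hbound : ∀ t ∈ Set.Icc u v, |ψ t| ≤ Real.sqrt n / 4 * φ t := by
    intro t ht
    have hsym : (G t)ᵀ = G t := hGsym t ht
    obtain ⟨h0, hcs⟩ := sym_trace_facts (hPt t ht) hsym
    have htr : |((γ t)⁻¹ * G t).trace| ≤ Real.sqrt n * Real.sqrt (trSq (γ t) (G t)) := by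
      rw [← Real.sqrt_mul_self (abs_nonneg ((γ t)⁻¹ * G t).trace)]
      rw [← Real.sqrt_mul (Nat.cast_nonneg n)]
      apply Real.sqrt_le_sqrt
      calc |((γ t)⁻¹ * G t).trace| * |((γ t)⁻¹ * G t).trace|
          = ((γ t)⁻¹ * G t).trace ^ 2 := by rw [← abs_mul, abs_mul_self, sq]
        _ ≤ (n : ℝ) * trSq (γ t) (G t) := hcs
    have : |ψ t| = 1/4 * f t * |((γ t)⁻¹ * G t).trace| := by
      rw [hψ, abs_mul, abs_mul]
      rw [abs_of_nonneg (by norm_num : (0:ℝ) ≤ 1/4), abs_of_nonneg (hfpos t ht).le]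
    rw [this]
    calc 1/4 * f t * |((γ t)⁻¹ * G t).trace|
        ≤ 1/4 * f t * (Real.sqrt n * Real.sqrt (trSq (γ t) (G t))) := by
          exact mul_le_mul_of_nonneg_left htr
            (mul_nonneg (by norm_num) (hfpos t ht).le)
      _ = Real.sqrt n / 4 * (Real.sqrt (trSq (γ t) (G t)) * qdet g (γ t)) := by
          rw [← hfq]; ring
      _ = Real.sqrt n / 4 * φ t := rfl
  -- integrability
  have hIcc : Set.uIcc u v = Set.Icc u v := Set.uIcc_of_le huv.le
  have hψint : IntervalIntegrable ψ volume u v := by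
    apply ContinuousOn.intervalIntegrable; rw [hIcc]; exact hψc
  have hφint : IntervalIntegrable φ volume u v := by
    apply ContinuousOn.intervalIntegrable; rw [hIcc]; exact hφc
  -- FTC
  have hFTC : ∫ t in u..v, ψ t = f v - f u :=
    intervalIntegral.integral_eq_sub_of_hasDeriv_right_of_le huv.le hfc
      (fun x hx => (hf' x hx).hasDerivWithinAt) hψint
  -- lower bound
  have hmono : ∫ t in u..v, (-ψ t) ≤ ∫ t in u..v, (Real.sqrt n / 4 * φ t) := by
    apply intervalIntegral.integral_mono_on huv.le hψint.neg
      (hφint.const_mul _)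
    intro x hx
    exact (neg_le_abs _).trans (hbound x hx)
  have hkey : f u - f v ≤ Real.sqrt n / 4 * ∫ t in u..v, φ t := by
    have h1 : ∫ t in u..v, (-ψ t) = f u - f v := by
      rw [intervalIntegral.integral_neg, hFTC]; ring
    have h2 : ∫ t in u..v, (Real.sqrt n / 4 * φ t)
        = Real.sqrt n / 4 * ∫ t in u..v, φ t := by
      exact intervalIntegral.integral_const_mul _ _
    rw [← h1, ← h2]; exact hmono
  -- a.e. equality of integrands
  have haeq : (fun t => fiberNorm g (γ t) (pathDeriv γ t)) =ᵐ[volume.restrict (Set.uIoc u v)] φ := by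
    rw [Set.uIoc_of_le huv.le]
    have h1 : ∀ᵐ x ∂volume.restrict (Set.Ioc u v), x ∈ Set.Ioc u v :=
      ae_restrict_mem measurableSet_Ioc
    have h2 : ∀ᵐ (x : ℝ) ∂volume.restrict (Set.Ioc u v), x ≠ v := by
      refine ae_restrict_of_ae ?_
      rw [ae_iff]
      have hset : {x : ℝ | ¬ x ≠ v} = {v} := by ext x; simp
      rw [hset]
      exact Real.volume_singleton
    filter_upwards [h1, h2] with x hx1 hx2
    have hxO : x ∈ Set.Ioo u v := ⟨hx1.1, lt_of_le_of_ne hx1.2 hx2⟩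
    rw [hGpath x hxO]
  constructor
  · exact hφint.congr_ae haeq.symm
  · have hIeq : ∫ t in u..v, fiberNorm g (γ t) (pathDeriv γ t) = ∫ t in u..v, φ t :=
      intervalIntegral.integral_congr_ae
        ((ae_restrict_iff' measurableSet_uIoc).mp haeq)
    rw [hIeq]
    calc 4 / Real.sqrt n * (qdet g (γ u) - qdet g (γ v))
        = 4 / Real.sqrt n * (f u - f v) := by rw [hfq u, hfq v]
      _ ≤ 4 / Real.sqrt n * (Real.sqrt n / 4 * ∫ t in u..v, φ t) :=
          mul_le_mul_of_nonneg_left hkey (by positivity)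
      _ = ∫ t in u..v, φ t := by
          have h4 : 4 / Real.sqrt (n:ℝ) * (Real.sqrt (n:ℝ) / 4) = 1 := by
            rw [div_mul_div_comm, mul_comm (Real.sqrt (n:ℝ)) 4]
            exact div_self (by positivity)
          rw [← mul_assoc, h4, one_mul]

lemma path_lower_bound {n : ℕ} (hn : 1 ≤ n) {g : Matrix (Fin n) (Fin n) ℝ} (hg : g.PosDef)
    {γ : ℝ → Matrix (Fin n) (Fin n) ℝ} {σ : ℝ} (hσ : σ ∈ Set.Ico (0:ℝ) 1)
    (hpc : PiecewiseC1On γ 0 σ)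
    (hP : ∀ t ∈ Set.Ico (0:ℝ) 1, (γ t).PosDef) :
    4 / Real.sqrt n * (qdet g (γ 0) - qdet g (γ σ)) ≤ pathLength g γ 0 σ := by
  classical
  obtain ⟨hcont, k, p, hmono, hp0, hpl, hC1⟩ := hpc
  set P : ℕ → ℝ := fun i => p ⟨min i k, Nat.lt_succ_of_le (min_le_right _ _)⟩ with hPdef
  have hPle : ∀ i (h : i ≤ k), P i = p ⟨i, Nat.lt_succ_of_le h⟩ := by
    intro i h
    simp only [hPdef]
    congr 1
    exact Fin.mk.injEq _ _ _ _ ▸ (min_eq_left h)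
  have hP0 : P 0 = 0 := by rw [hPle 0 (Nat.zero_le k)]; exact hp0
  have hPk : P k = σ := by rw [hPle k le_rfl]; exact hpl
  -- per piece facts
  have pieces : ∀ i, i < k →
      IntervalIntegrable (fun t => fiberNorm g (γ t) (pathDeriv γ t)) volume (P i) (P (i+1)) ∧
      4 / Real.sqrt n * (qdet g (γ (P i)) - qdet g (γ (P (i+1)))) ≤
        ∫ t in (P i)..(P (i+1)), fiberNorm g (γ t) (pathDeriv γ t) := by
    intro i hik
    have hi1 : i + 1 ≤ k := hik
    have hu : P i = p ⟨i, Nat.lt_succ_of_le hik.le⟩ := hPle i hik.le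
    have hv : P (i+1) = p ⟨i+1, Nat.lt_succ_of_le hi1⟩ := hPle (i+1) hi1
    have huv : P i < P (i+1) := by
      rw [hu, hv]; exact hmono (by simp [Fin.lt_def])
    have hub : (0:ℝ) ≤ P i := by
      rw [hu, ← hp0]; exact hmono.monotone (by simp [Fin.le_def])
    have hvb : P (i+1) ≤ σ := by
      rw [hv, ← hpl]; exact hmono.monotone (by simp [Fin.le_def, Fin.last]; omega)
    have hsub : Set.Icc (P i) (P (i+1)) ⊆ Set.Ico 0 1 := by
      intro x hx
      exact ⟨hub.trans hx.1, lt_of_le_of_lt (hx.2.trans hvb) hσ.2⟩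
    have hc1 : C1On γ (Set.Icc (P i) (P (i+1))) := by
      have := hC1 ⟨i, hik⟩
      have e1 : (⟨i, hik⟩ : Fin k).castSucc = ⟨i, Nat.lt_succ_of_le hik.le⟩ := rfl
      have e2 : (⟨i, hik⟩ : Fin k).succ = ⟨i+1, Nat.lt_succ_of_le hi1⟩ := rfl
      rw [e1, e2] at this
      rw [hu, hv]; exact this
    exact piece_bound hn hg huv hsub hP hc1
  have hsum : ∑ i ∈ Finset.range k,
      ∫ t in (P i)..(P (i+1)), fiberNorm g (γ t) (pathDeriv γ t)
      = ∫ t in (P 0)..(P k), fiberNorm g (γ t) (pathDeriv γ t) :=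
    intervalIntegral.sum_integral_adjacent_intervals (fun i hi => (pieces i hi).1)
  have htel : ∑ i ∈ Finset.range k,
      (4 / Real.sqrt n * (qdet g (γ (P i)) - qdet g (γ (P (i+1)))))
      = 4 / Real.sqrt n * (qdet g (γ (P 0)) - qdet g (γ (P k))) := by
    rw [← Finset.mul_sum]
    congr 1
    exact Finset.sum_range_sub' (fun i => qdet g (γ (P i))) k
  have hineq : ∑ i ∈ Finset.range k,
      (4 / Real.sqrt n * (qdet g (γ (P i)) - qdet g (γ (P (i+1)))))
      ≤ ∑ i ∈ Finset.range k,
        ∫ t in (P i)..(P (i+1)), fiberNorm g (γ t) (pathDeriv γ t) :=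
    Finset.sum_le_sum fun i hi => (pieces i (Finset.mem_range.mp hi)).2
  rw [htel, hP0, hPk] at hineq
  rw [hsum, hP0, hPk] at hineq
  exact hineq

lemma seg_pathDeriv {n : ℕ} (a : Matrix (Fin n) (Fin n) ℝ) (t : ℝ) :
    pathDeriv (fun s => (1 - s) • a) t = -a := by
  ext i j
  show deriv (fun s => ((1 - s) • a) i j) t = (-a) i j
  have heq : (fun s : ℝ => ((1 - s) • a) i j) = fun s => (1 - s) * a i j := by
    funext s; simp [Matrix.smul_apply]
  rw [heq]
  have h : HasDerivAt (fun s : ℝ => (1 - s) * a i j) (-(a i j)) t := by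
    simpa using ((hasDerivAt_id t).const_sub 1).mul_const (a i j)
  rw [h.deriv]; simp [Matrix.neg_apply]

lemma seg_pathLength {n : ℕ} (hn : 1 ≤ n) {g a : Matrix (Fin n) (Fin n) ℝ}
    (hg : g.PosDef) (ha : a.PosDef) {s : ℝ} (hs : s ∈ Set.Ico (0:ℝ) 1) :
    pathLength g (fun t => (1 - t) • a) 0 s
      = 4 / Real.sqrt n * qdet g a * (1 - (1 - s) ^ ((n : ℝ) / 4)) := by
  have hn0 : (n:ℝ) ≠ 0 := Nat.cast_ne_zero.mpr (by omega)
  have hnpos : (0:ℝ) < n := by exact_mod_cast Nat.pos_of_ne_zero (by omega)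
  have hsqn : (0:ℝ) < Real.sqrt n := Real.sqrt_pos.mpr hnpos
  have hIcc : Set.uIcc (0:ℝ) s = Set.Icc 0 s := Set.uIcc_of_le hs.1
  have hsubset : Set.Icc (0:ℝ) s ⊆ Set.Ico 0 1 := fun x hx =>
    ⟨hx.1, lt_of_le_of_lt hx.2 hs.2⟩
  set K := Real.sqrt n * qdet g a with hK
  have h1 : Set.EqOn (fun t => fiberNorm g ((1 - t) • a)
      (pathDeriv (fun u => (1 - u) • a) t))
      (fun t => K * (1 - t) ^ ((n:ℝ)/4 - 1)) (Set.uIcc 0 s) := by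
    intro t ht
    rw [hIcc] at ht
    show fiberNorm g ((1 - t) • a) (pathDeriv (fun u => (1 - u) • a) t) = _
    rw [seg_pathDeriv, seg_fiberNorm hn hg ha (hsubset ht)]
  rw [pathLength, intervalIntegral.integral_congr h1]
  have hFTC : ∫ t in (0:ℝ)..s, K * (1 - t) ^ ((n:ℝ)/4 - 1)
      = (fun t => -(K * (4/(n:ℝ)) * (1 - t) ^ ((n:ℝ)/4))) s
        - (fun t => -(K * (4/(n:ℝ)) * (1 - t) ^ ((n:ℝ)/4))) 0 := by
    apply intervalIntegral.integral_eq_sub_of_hasDerivAt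
    · intro t ht
      rw [hIcc] at ht
      have h1t : 0 < 1 - t := by have := (hsubset ht).2; linarith
      have hbase : HasDerivAt (fun u : ℝ => 1 - u) (-1) t := by
        simpa using (hasDerivAt_id t).const_sub 1
      have hpow := hbase.rpow_const (p := (n:ℝ)/4) (Or.inl h1t.ne')
      have h2 := (hpow.const_mul (K * (4/(n:ℝ)))).neg
      have hval : -(K * (4/(n:ℝ)) * ((-1) * ((n:ℝ)/4) * (1 - t) ^ ((n:ℝ)/4 - 1)))
          = K * (1 - t) ^ ((n:ℝ)/4 - 1) := by
        field_simp
      rw [hval] at h2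
      exact h2
    · apply ContinuousOn.intervalIntegrable
      apply ContinuousOn.mul continuousOn_const
      apply ContinuousOn.rpow_const ((continuous_const.sub continuous_id).continuousOn)
      intro t ht
      rw [hIcc] at ht
      exact Or.inl (by have := (hsubset ht).2; simp; intro h; linarith)
  rw [hFTC]
  simp only [sub_zero, Real.one_rpow]
  have hKdiv : K * (4/(n:ℝ)) = 4 / Real.sqrt n * qdet g a := by
    rw [hK]
    have hss : Real.sqrt (n:ℝ) * Real.sqrt (n:ℝ) = (n:ℝ) :=
      Real.mul_self_sqrt (Nat.cast_nonneg n)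
    field_simp
    linear_combination qdet g a * hss
  rw [← hKdiv]; ring

lemma seg_posDef {n : ℕ} {a : Matrix (Fin n) (Fin n) ℝ} (ha : a.PosDef) {t : ℝ}
    (ht : t ∈ Set.Ico (0:ℝ) 1) : ((1 - t) • a).PosDef :=
  posDef_smul' ha (by have := ht.2; linarith)

lemma seg_piecewise {n : ℕ} (a : Matrix (Fin n) (Fin n) ℝ) {s : ℝ} (hs : 0 < s) :
    PiecewiseC1On (fun t => (1 - t) • a) 0 s := by
  have hc : ∀ (u : Set ℝ), C1On (fun t => (1 - t) • a) u := by
    intro u i j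
    have : (fun t : ℝ => ((1 - t) • a) i j) = fun t => (1 - t) * a i j := by
      funext t; simp [Matrix.smul_apply]
    rw [this]
    exact (((contDiff_const.sub contDiff_id).mul contDiff_const)).contDiffOn
  refine ⟨?_, 1, ![0, s], ?_, rfl, rfl, fun i => hc _⟩
  · refine (continuousOn_pi (X := fun _ : Fin n => Fin n → ℝ) (f := fun t => (1 - t) • a)).mpr fun i => (continuousOn_pi (f := fun t => ((1 - t) • a) i)).mpr fun j => ?_
    simpa using ((hc Set.univ) i j).continuousOn.mono (Set.subset_univ _)
  · intro i j hij
    fin_cases i <;> fin_cases j <;> simp_all <;> omega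

lemma qdet_pos {n : ℕ} {g a : Matrix (Fin n) (Fin n) ℝ} (hg : g.PosDef) (ha : a.PosDef) :
    0 < qdet g a :=
  Real.rpow_pos_of_pos (det_gammainv_pos hg ha) _

lemma tendsto_inv_j2 : Tendsto (fun j : ℕ => 1/((j:ℝ)+2)) atTop (nhds 0) := by
  simp only [one_div]
  exact tendsto_inv_atTop_zero.comp
    (tendsto_atTop_add_const_right _ 2 tendsto_natCast_atTop_atTop)

lemma tendsto_inv_j1 : Tendsto (fun j : ℕ => 1/((j:ℝ)+1)) atTop (nhds 0) := by
  simp only [one_div]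
  exact tendsto_inv_atTop_zero.comp
    (tendsto_atTop_add_const_right _ 1 tendsto_natCast_atTop_atTop)

lemma rpow_tendsto_zero {p : ℝ} (hp : 0 < p) {f : ℕ → ℝ}
    (hf : Tendsto f atTop (nhds 0)) :
    Tendsto (fun j => (f j) ^ p) atTop (nhds 0) := by
  have hc : ContinuousAt (fun x : ℝ => x ^ p) 0 :=
    Real.continuousAt_rpow_const 0 p (Or.inr hp.le)
  have := (hc.tendsto).comp hf
  rwa [Real.zero_rpow hp.ne'] at this

lemma seg_sup {n : ℕ} (hn : 1 ≤ n) {g a : Matrix (Fin n) (Fin n) ℝ}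
    (hg : g.PosDef) (ha : a.PosDef) :
    (⨆ s ∈ Set.Ico (0:ℝ) 1, ENNReal.ofReal (pathLength g (fun t => (1 - t) • a) 0 s))
      = ENNReal.ofReal (4 / Real.sqrt n * qdet g a) := by
  have hnpos : (0:ℝ) < n := by exact_mod_cast Nat.pos_of_ne_zero (by omega)
  have hppos : (0:ℝ) < (n:ℝ)/4 := by positivity
  have hC0 : 0 ≤ 4 / Real.sqrt n * qdet g a := by
    have := qdet_pos hg ha
    positivity
  apply le_antisymm
  · refine iSup₂_le fun s hs => ?_
    rw [seg_pathLength hn hg ha hs]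
    apply ENNReal.ofReal_le_ofReal
    have hx : 0 ≤ (1 - s) ^ ((n:ℝ)/4) := Real.rpow_nonneg (by linarith [hs.2]) _
    nlinarith
  · set w : ℕ → ℝ := fun j => 1 - 1/((j:ℝ)+1) with hw
    have hwm : ∀ j, w j ∈ Set.Ico (0:ℝ) 1 := by
      intro j
      have h1 : (0:ℝ) < (j:ℝ)+1 := by positivity
      constructor
      · simp only [hw, sub_nonneg]
        rw [div_le_one h1]; linarith
      · simp only [hw, sub_lt_self_iff]
        positivity
    have h1 : Tendsto (fun j => (1 - w j) ^ ((n:ℝ)/4)) atTop (nhds 0) := by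
      apply rpow_tendsto_zero hppos
      simp only [hw, sub_sub_cancel]
      exact tendsto_inv_j1
    have h2 : Tendsto (fun j => 4 / Real.sqrt n * qdet g a * (1 - (1 - w j) ^ ((n:ℝ)/4)))
        atTop (nhds (4 / Real.sqrt n * qdet g a)) := by
      have := (tendsto_const_nhds (x := (1:ℝ)) (f := atTop (α := ℕ))).sub h1
      have h3 := (tendsto_const_nhds (x := 4 / Real.sqrt n * qdet g a)
        (f := atTop (α := ℕ))).mul this
      simpa using h3
    have hlim : Tendsto (fun j => ENNReal.ofReal
        (4 / Real.sqrt n * qdet g a * (1 - (1 - w j) ^ ((n:ℝ)/4)))) atTop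
        (nhds (ENNReal.ofReal (4 / Real.sqrt n * qdet g a))) :=
      (ENNReal.continuous_ofReal.tendsto _).comp h2
    refine le_of_tendsto hlim (Filter.Eventually.of_forall fun j => ?_)
    have heq : ENNReal.ofReal (4 / Real.sqrt n * qdet g a * (1 - (1 - w j) ^ ((n:ℝ)/4)))
        = ENNReal.ofReal (pathLength g (fun t => (1 - t) • a) 0 (w j)) := by
      rw [seg_pathLength hn hg ha (hwm j)]
    rw [heq]
    exact le_iSup₂ (f := fun s (_ : s ∈ Set.Ico (0:ℝ) 1) =>
      ENNReal.ofReal (pathLength g (fun t => (1 - t) • a) 0 s)) (w j) (hwm j)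

lemma seg_det_tendsto {n : ℕ} (hn : 1 ≤ n) (g a : Matrix (Fin n) (Fin n) ℝ) :
    Tendsto (fun t : ℝ => (g⁻¹ * ((1 - t) • a)).det) (nhdsWithin 1 (Set.Iio 1)) (nhds 0) := by
  have heq : (fun t : ℝ => (g⁻¹ * ((1 - t) • a)).det)
      = fun t => (1 - t)^n * (g⁻¹ * a).det := by
    funext t; rw [Matrix.mul_smul, Matrix.det_smul, Fintype.card_fin]
  have hcont : Continuous fun t : ℝ => (1 - t)^n * (g⁻¹ * a).det :=
    (((continuous_const.sub continuous_id).pow n).mul continuous_const)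
  have h := hcont.tendsto 1
  have hval : ((1:ℝ) - 1)^n * (g⁻¹ * a).det = 0 := by
    rw [sub_self, zero_pow (by omega), zero_mul]
  rw [hval] at h
  exact ((h.congr (fun t => (congrFun heq t).symm)).mono_left nhdsWithin_le_nhds)

/-- the distance from `a` to the singular point `[0]` of the completion is
`(4/√n)·(det(g⁻¹a))^{1/4}`. -/
theorem stmt_18 (n : ℕ) (hn : 1 ≤ n) (g : Matrix (Fin n) (Fin n) ℝ) (hg : g ∈ Pn n)
    (a : Matrix (Fin n) (Fin n) ℝ) (ha : a ∈ Pn n) :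
    sInf {L : ENNReal | ∃ γ : ℝ → Matrix (Fin n) (Fin n) ℝ,
        (∀ s : ℝ, 0 < s → s < 1 → PiecewiseC1On γ 0 s) ∧
        (∀ t ∈ Set.Ico (0 : ℝ) 1, γ t ∈ Pn n) ∧
        γ 0 = a ∧
        Filter.Tendsto (fun t => (g⁻¹ * γ t).det) (nhdsWithin 1 (Set.Iio 1)) (nhds 0) ∧
        L = ⨆ s ∈ Set.Ico (0 : ℝ) 1, ENNReal.ofReal (pathLength g γ 0 s)} =
      ENNReal.ofReal (4 / Real.sqrt n * qdet g a) := by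
  have hgP : g.PosDef := hg
  have haP : a.PosDef := ha
  apply le_antisymm
  · have hmem : (⨆ s ∈ Set.Ico (0:ℝ) 1,
        ENNReal.ofReal (pathLength g (fun t => (1 - t) • a) 0 s)) ∈
        {L : ENNReal | ∃ γ : ℝ → Matrix (Fin n) (Fin n) ℝ,
          (∀ s : ℝ, 0 < s → s < 1 → PiecewiseC1On γ 0 s) ∧
          (∀ t ∈ Set.Ico (0 : ℝ) 1, γ t ∈ Pn n) ∧
          γ 0 = a ∧
          Filter.Tendsto (fun t => (g⁻¹ * γ t).det) (nhdsWithin 1 (Set.Iio 1)) (nhds 0) ∧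
          L = ⨆ s ∈ Set.Ico (0 : ℝ) 1, ENNReal.ofReal (pathLength g γ 0 s)} := by
      refine ⟨fun t => (1 - t) • a, ?_, ?_, ?_, ?_, rfl⟩
      · intro s hs0 _; exact seg_piecewise a hs0
      · intro t ht; exact seg_posDef haP ht
      · simp
      · exact seg_det_tendsto hn g a
    have h := sInf_le hmem
    rwa [seg_sup hn hgP haP] at h
  · refine le_sInf fun L hL => ?_
    obtain ⟨γ, hpc, hPmem, hγ0, hdet, rfl⟩ := hL
    have hP' : ∀ t ∈ Set.Ico (0:ℝ) 1, (γ t).PosDef := fun t ht => hPmem t ht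
    set w : ℕ → ℝ := fun j => 1 - 1/((j:ℝ)+2) with hw
    have hwm : ∀ j, w j ∈ Set.Ico (0:ℝ) 1 ∧ 0 < w j := by
      intro j
      have h2 : (0:ℝ) < (j:ℝ)+2 := by positivity
      have hle : 1/((j:ℝ)+2) ≤ 1/2 :=
        one_div_le_one_div_of_le two_pos (by linarith [Nat.cast_nonneg (α := ℝ) j])
      have hpos : 0 < 1/((j:ℝ)+2) := by positivity
      refine ⟨⟨by simp only [hw]; linarith, by simp only [hw]; linarith⟩, ?_⟩
      simp only [hw]; linarith
    have hlow : ∀ j, 4 / Real.sqrt n * (qdet g a - qdet g (γ (w j)))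
        ≤ pathLength g γ 0 (w j) := by
      intro j
      have := path_lower_bound hn hgP (hwm j).1
        (hpc (w j) (hwm j).2 (hwm j).1.2) hP'
      rwa [hγ0] at this
    have hwt : Tendsto w atTop (nhdsWithin 1 (Set.Iio 1)) := by
      rw [tendsto_nhdsWithin_iff]
      constructor
      · rw [hw]
        have h1 : Tendsto (fun j : ℕ => 1 - 1/((j:ℝ)+2)) atTop (nhds (1 - 0)) :=
          tendsto_const_nhds.sub tendsto_inv_j2
        simpa using h1
      · refine Filter.Eventually.of_forall fun j => ?_
        have : 0 < 1/((j:ℝ)+2) := by positivity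
        simp only [hw, Set.mem_Iio]; linarith
    have hdq : Tendsto (fun j => qdet g (γ (w j))) atTop (nhds 0) := by
      have h1 : Tendsto (fun j => (g⁻¹ * γ (w j)).det) atTop (nhds 0) := hdet.comp hwt
      have h2 := rpow_tendsto_zero (p := (1:ℝ)/4) (by norm_num) h1
      simpa [qdet] using h2
    have hreal : Tendsto (fun j => 4 / Real.sqrt n * (qdet g a - qdet g (γ (w j)))) atTop
        (nhds (4 / Real.sqrt n * qdet g a)) := by
      have h1 := (tendsto_const_nhds (x := qdet g a) (f := atTop (α := ℕ))).sub hdq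
      have h3 := (tendsto_const_nhds (x := 4 / Real.sqrt (n:ℝ)) (f := atTop (α := ℕ))).mul h1
      simpa using h3
    have hlim := (ENNReal.continuous_ofReal.tendsto _).comp hreal
    refine le_of_tendsto hlim (Filter.Eventually.of_forall fun j => ?_)
    calc ENNReal.ofReal (4 / Real.sqrt n * (qdet g a - qdet g (γ (w j))))
        ≤ ENNReal.ofReal (pathLength g γ 0 (w j)) := ENNReal.ofReal_le_ofReal (hlow j)
      _ ≤ ⨆ s ∈ Set.Ico (0:ℝ) 1, ENNReal.ofReal (pathLength g γ 0 s) :=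
          le_iSup₂ (f := fun s (_ : s ∈ Set.Ico (0:ℝ) 1) =>
            ENNReal.ofReal (pathLength g γ 0 s)) (w j) (hwm j).1

end
end
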